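/- arXiv:2002.11577 — 2 statements merged into one kernel-verified Lean document; each statement's English description precedes it below -/
import Mathlib

section
/- Let K ≥ 1 and n_1, …, n_K be positive integers summing to n. Define p(α) = Γ(αK) · ∏_{k=1}^K Γ(α + n_k) / (Γ(α)^K · Γ(n + αK)). Then lim_{α→0⁺} [log p(α) − (K−1) log α] = −log K + Σ_{k=1}^K log Γ(n_k) − log Γ(n). -/
open Real Filter

private lemma gamma_contLog {x : ℝ} (hx : 0 < x) :
    ContinuousAt (fun t : ℝ => Real.log (Real.Gamma t)) x := by
  refine ContinuousAt.log ?_ (Real.Gamma_pos_of_pos hx).ne'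
  refine (Real.differentiableAt_Gamma ?_).continuousAt
  intro m h
  have : (0:ℝ) ≤ m := Nat.cast_nonneg m
  rw [h] at hx; linarith

theorem icl_lin_intercept_limit
    (K n : ℕ) (hK : 1 ≤ K) (nk : Fin K → ℕ)
    (hpos : ∀ k, 0 < nk k) (hsum : ∑ k, nk k = n) :
    Tendsto
      (fun α : ℝ =>
        Real.log (Real.Gamma (α * K) * (∏ k, Real.Gamma (α + nk k)) /
            (Real.Gamma α ^ K * Real.Gamma (n + α * K)))
          - ((K : ℝ) - 1) * Real.log α)
      (nhdsWithin 0 (Set.Ioi 0))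
      (nhds (-Real.log K + (∑ k, Real.log (Real.Gamma (nk k))) - Real.log (Real.Gamma n))) := by
  have hKpos : (0:ℝ) < K := by exact_mod_cast hK
  have hnpos : 0 < n := by
    have h0 := hpos ⟨0, hK⟩
    have : nk ⟨0, hK⟩ ≤ ∑ k, nk k :=
      Finset.single_le_sum (fun i _ => Nat.zero_le _) (Finset.mem_univ _)
    omega
  have hnR : (0:ℝ) < n := by exact_mod_cast hnpos
  -- the nice function
  set g : ℝ → ℝ := fun α =>
    Real.log (Real.Gamma (α * K + 1)) - Real.log K
      + ∑ k, Real.log (Real.Gamma (α + nk k))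
      - K * Real.log (Real.Gamma (α + 1))
      - Real.log (Real.Gamma (n + α * K)) with hg
  have hgtend : Tendsto g (nhdsWithin 0 (Set.Ioi 0))
      (nhds (-Real.log K + (∑ k, Real.log (Real.Gamma (nk k))) - Real.log (Real.Gamma n))) := by
    have hcont : ContinuousAt g 0 := by
      apply ContinuousAt.sub
      apply ContinuousAt.sub
      apply ContinuousAt.add
      apply ContinuousAt.sub
      · show ContinuousAt ((fun t : ℝ => Real.log (Real.Gamma t)) ∘ fun α : ℝ => α * K + 1) 0
        exact ContinuousAt.comp (gamma_contLog (by norm_num : (0:ℝ) < 0 * K + 1)) (by fun_prop)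
      · exact continuousAt_const
      · apply tendsto_finset_sum
        intro k _
        have hnkk : (0:ℝ) < 0 + nk k := by
          have : (0:ℝ) < nk k := by exact_mod_cast hpos k
          linarith
        show ContinuousAt ((fun t : ℝ => Real.log (Real.Gamma t)) ∘ fun α : ℝ => α + nk k) 0
        exact ContinuousAt.comp (gamma_contLog hnkk) (by fun_prop)
      · refine continuousAt_const.mul ?_
        show ContinuousAt ((fun t : ℝ => Real.log (Real.Gamma t)) ∘ fun α : ℝ => α + 1) 0
        exact ContinuousAt.comp (gamma_contLog (by norm_num : (0:ℝ) < 0 + 1)) (by fun_prop)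
      · have hn0 : (0:ℝ) < n + 0 * K := by simpa using hnR
        show ContinuousAt ((fun t : ℝ => Real.log (Real.Gamma t)) ∘ fun α : ℝ => (n:ℝ) + α * K) 0
        exact ContinuousAt.comp (gamma_contLog hn0) (by fun_prop)
    have h0 : g 0 = -Real.log K + (∑ k, Real.log (Real.Gamma (nk k))) - Real.log (Real.Gamma n) := by
      simp [hg, Real.Gamma_one]
    have := hcont.tendsto
    rw [h0] at this
    exact this.mono_left nhdsWithin_le_nhds
  refine hgtend.congr' ?_
  filter_upwards [self_mem_nhdsWithin] with α (hα : 0 < α)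
  have hΓα := Real.Gamma_pos_of_pos hα
  have hαK : 0 < α * K := mul_pos hα hKpos
  have hΓαK := Real.Gamma_pos_of_pos hαK
  have hΓn : 0 < Real.Gamma (n + α * K) := Real.Gamma_pos_of_pos (by linarith)
  have hΓnk : ∀ k : Fin K, 0 < Real.Gamma (α + nk k) := by
    intro k
    have : (0:ℝ) < nk k := by exact_mod_cast hpos k
    exact Real.Gamma_pos_of_pos (by linarith)
  have hprod : 0 < ∏ k, Real.Gamma (α + nk k) := Finset.prod_pos fun k _ => hΓnk k
  -- expand the log
  have hlog : Real.log (Real.Gamma (α * K) * (∏ k, Real.Gamma (α + nk k)) /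
      (Real.Gamma α ^ K * Real.Gamma (n + α * K)))
      = Real.log (Real.Gamma (α * K)) + ∑ k, Real.log (Real.Gamma (α + nk k))
        - K * Real.log (Real.Gamma α) - Real.log (Real.Gamma (n + α * K)) := by
    rw [Real.log_div (by positivity) (by positivity), Real.log_mul hΓαK.ne' hprod.ne',
      Real.log_mul (by positivity) hΓn.ne', Real.log_pow,
      Real.log_prod (fun k _ => (hΓnk k).ne')]
    ring
  -- Γ(x+1) = x Γ(x)
  have hrecα : Real.log (Real.Gamma α) = Real.log (Real.Gamma (α + 1)) - Real.log α := by
    rw [Real.Gamma_add_one hα.ne', Real.log_mul hα.ne' hΓα.ne']; ring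
  have hrecαK : Real.log (Real.Gamma (α * K))
      = Real.log (Real.Gamma (α * K + 1)) - Real.log α - Real.log K := by
    rw [Real.Gamma_add_one hαK.ne', Real.log_mul hαK.ne' hΓαK.ne',
      Real.log_mul hα.ne' hKpos.ne']; ring
  simp only [hg]
  rw [hlog, hrecα, hrecαK]
  ring
end

section
/- Let α > 0, K_r, K_c ≥ 1, and define ICL_lin(Z, α) = (K_r − 1) log α + (K_c − 1) log α + I(Z) for a bipartition Z with K_r row clusters and K_c column clusters. Then as α → 0⁺, log p(Z | α) − (K_r + K_c − 2) log α converges to I(Z) := −log K_r − log K_c + Σ_k log Γ(n_k) + Σ_l log Γ(m_l) − log Γ(n) − log Γ(p), where p(Z | α) is the factorized Dirichlet-multinomial bipartition probability. -/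
open Real Filter

private lemma aux_logGamma {f : ℝ → ℝ} {b : ℝ} (hb : 0 < b)
    (hf : Tendsto f (nhds 0) (nhds b)) :
    Tendsto (fun α => Real.log (Real.Gamma (f α))) (nhds (0:ℝ))
      (nhds (Real.log (Real.Gamma b))) := by
  have h1 : ContinuousAt Real.Gamma b :=
    (Real.differentiableAt_Gamma (fun m => by
      have : (0:ℝ) ≤ m := Nat.cast_nonneg m
      have : (-(m:ℝ)) < b := by linarith
      exact this.ne')).continuousAt
  have h2 : ContinuousAt Real.log (Real.Gamma b) :=
    Real.continuousAt_log (Real.Gamma_pos_of_pos hb).ne'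
  have := (h2.comp h1).tendsto.comp hf
  exact this

theorem lbm_icl_lin_intercept_limit
    (n p Kr Kc : ℕ) (hKr : 1 ≤ Kr) (hKc : 1 ≤ Kc)
    (nk : Fin Kr → ℕ) (ml : Fin Kc → ℕ)
    (hnk : ∀ k, 0 < nk k) (hml : ∀ l, 0 < ml l)
    (hsumn : ∑ k, nk k = n) (hsump : ∑ l, ml l = p) :
    Tendsto
      (fun α : ℝ =>
        Real.log
            ((Real.Gamma (α * Kr) * (∏ k, Real.Gamma (α + nk k)) /
                (Real.Gamma α ^ Kr * Real.Gamma (n + α * Kr))) *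
              (Real.Gamma (α * Kc) * (∏ l, Real.Gamma (α + ml l)) /
                (Real.Gamma α ^ Kc * Real.Gamma (p + α * Kc))))
          - ((Kr : ℝ) + Kc - 2) * Real.log α)
      (nhdsWithin 0 (Set.Ioi 0))
      (nhds (-Real.log Kr - Real.log Kc
        + (∑ k, Real.log (Real.Gamma (nk k))) + (∑ l, Real.log (Real.Gamma (ml l)))
        - Real.log (Real.Gamma n) - Real.log (Real.Gamma p))) := by
  have hKr0 : (0:ℝ) < Kr := by exact_mod_cast hKr
  have hKc0 : (0:ℝ) < Kc := by exact_mod_cast hKc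
  have hn1 : 1 ≤ n := by
    subst hsumn
    calc 1 ≤ nk ⟨0, hKr⟩ := hnk _
    _ ≤ ∑ k, nk k := Finset.single_le_sum (fun i _ => Nat.zero_le _) (Finset.mem_univ _)
  have hp1 : 1 ≤ p := by
    subst hsump
    calc 1 ≤ ml ⟨0, hKc⟩ := hml _
    _ ≤ ∑ l, ml l := Finset.single_le_sum (fun i _ => Nat.zero_le _) (Finset.mem_univ _)
  have hn0 : (0:ℝ) < n := by exact_mod_cast hn1
  have hp0 : (0:ℝ) < p := by exact_mod_cast hp1
  set G : ℝ → ℝ := fun α =>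
    (Real.log (Real.Gamma (α * Kr + 1)) - Kr * Real.log (Real.Gamma (α + 1)) - Real.log Kr
      + (∑ k, Real.log (Real.Gamma (α + nk k))) - Real.log (Real.Gamma ((n:ℝ) + α * Kr)))
    + (Real.log (Real.Gamma (α * Kc + 1)) - Kc * Real.log (Real.Gamma (α + 1)) - Real.log Kc
      + (∑ l, Real.log (Real.Gamma (α + ml l))) - Real.log (Real.Gamma ((p:ℝ) + α * Kc)))
    with hG
  have hGlim : Tendsto G (nhds 0)
      (nhds (-Real.log Kr - Real.log Kc
        + (∑ k, Real.log (Real.Gamma (nk k))) + (∑ l, Real.log (Real.Gamma (ml l)))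
        - Real.log (Real.Gamma n) - Real.log (Real.Gamma p))) := by
    have t1 : Tendsto (fun α : ℝ => Real.log (Real.Gamma (α * Kr + 1))) (nhds 0)
        (nhds (Real.log (Real.Gamma 1))) :=
      aux_logGamma one_pos (by
        have : Tendsto (fun α : ℝ => α * Kr + 1) (nhds 0) (nhds (0 * Kr + 1)) := by
          exact ((continuous_id.mul continuous_const).add continuous_const).tendsto 0
        simpa using this)
    have t1' : Tendsto (fun α : ℝ => Real.log (Real.Gamma (α * Kc + 1))) (nhds 0)
        (nhds (Real.log (Real.Gamma 1))) :=
      aux_logGamma one_pos (by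
        have : Tendsto (fun α : ℝ => α * Kc + 1) (nhds 0) (nhds (0 * Kc + 1)) := by
          exact ((continuous_id.mul continuous_const).add continuous_const).tendsto 0
        simpa using this)
    have t2 : Tendsto (fun α : ℝ => Real.log (Real.Gamma (α + 1))) (nhds 0)
        (nhds (Real.log (Real.Gamma 1))) :=
      aux_logGamma one_pos (by
        have : Tendsto (fun α : ℝ => α + 1) (nhds 0) (nhds (0 + 1)) :=
          (continuous_id.add continuous_const).tendsto 0
        simpa using this)
    have t3 : ∀ k : Fin Kr, Tendsto (fun α : ℝ => Real.log (Real.Gamma (α + nk k))) (nhds 0)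
        (nhds (Real.log (Real.Gamma (nk k)))) := fun k =>
      aux_logGamma (by exact_mod_cast hnk k) (by
        have : Tendsto (fun α : ℝ => α + (nk k : ℝ)) (nhds 0) (nhds (0 + nk k)) :=
          (continuous_id.add continuous_const).tendsto 0
        simpa using this)
    have t3' : ∀ l : Fin Kc, Tendsto (fun α : ℝ => Real.log (Real.Gamma (α + ml l))) (nhds 0)
        (nhds (Real.log (Real.Gamma (ml l)))) := fun l =>
      aux_logGamma (by exact_mod_cast hml l) (by
        have : Tendsto (fun α : ℝ => α + (ml l : ℝ)) (nhds 0) (nhds (0 + ml l)) :=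
          (continuous_id.add continuous_const).tendsto 0
        simpa using this)
    have t4 : Tendsto (fun α : ℝ => Real.log (Real.Gamma ((n:ℝ) + α * Kr))) (nhds 0)
        (nhds (Real.log (Real.Gamma n))) :=
      aux_logGamma hn0 (by
        have : Tendsto (fun α : ℝ => (n:ℝ) + α * Kr) (nhds 0) (nhds ((n:ℝ) + 0 * Kr)) :=
          (continuous_const.add (continuous_id.mul continuous_const)).tendsto 0
        simpa using this)
    have t4' : Tendsto (fun α : ℝ => Real.log (Real.Gamma ((p:ℝ) + α * Kc))) (nhds 0)
        (nhds (Real.log (Real.Gamma p))) :=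
      aux_logGamma hp0 (by
        have : Tendsto (fun α : ℝ => (p:ℝ) + α * Kc) (nhds 0) (nhds ((p:ℝ) + 0 * Kc)) :=
          (continuous_const.add (continuous_id.mul continuous_const)).tendsto 0
        simpa using this)
    have ts : Tendsto (fun α : ℝ => ∑ k, Real.log (Real.Gamma (α + nk k))) (nhds 0)
        (nhds (∑ k, Real.log (Real.Gamma (nk k)))) :=
      tendsto_finset_sum _ (fun k _ => t3 k)
    have ts' : Tendsto (fun α : ℝ => ∑ l, Real.log (Real.Gamma (α + ml l))) (nhds 0)
        (nhds (∑ l, Real.log (Real.Gamma (ml l)))) :=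
      tendsto_finset_sum _ (fun l _ => t3' l)
    have big : Tendsto G (nhds 0)
        (nhds ((Real.log (Real.Gamma 1) - Kr * Real.log (Real.Gamma 1) - Real.log Kr
            + (∑ k, Real.log (Real.Gamma (nk k))) - Real.log (Real.Gamma n))
          + (Real.log (Real.Gamma 1) - Kc * Real.log (Real.Gamma 1) - Real.log Kc
            + (∑ l, Real.log (Real.Gamma (ml l))) - Real.log (Real.Gamma p)))) :=
      (((((t1.sub (t2.const_mul (Kr:ℝ))).sub
          (tendsto_const_nhds : Tendsto (fun _ : ℝ => Real.log (Kr:ℝ)) _ _)).add ts).sub t4).add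
        ((((t1'.sub (t2.const_mul (Kc:ℝ))).sub
          (tendsto_const_nhds : Tendsto (fun _ : ℝ => Real.log (Kc:ℝ)) _ _)).add ts').sub t4'))
    convert big using 2
    simp [Real.Gamma_one]
    ring
  refine Tendsto.congr' ?_ (hGlim.mono_left nhdsWithin_le_nhds)
  filter_upwards [self_mem_nhdsWithin] with α (hα : (0:ℝ) < α)
  have hαKr : (0:ℝ) < α * Kr := mul_pos hα hKr0
  have hαKc : (0:ℝ) < α * Kc := mul_pos hα hKc0
  have g1 : (0:ℝ) < Real.Gamma (α * Kr) := Real.Gamma_pos_of_pos hαKr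
  have g1' : (0:ℝ) < Real.Gamma (α * Kc) := Real.Gamma_pos_of_pos hαKc
  have g2 : (0:ℝ) < Real.Gamma α := Real.Gamma_pos_of_pos hα
  have g3 : ∀ k : Fin Kr, (0:ℝ) < Real.Gamma (α + nk k) := fun k =>
    Real.Gamma_pos_of_pos (add_pos hα (by exact_mod_cast hnk k))
  have g3' : ∀ l : Fin Kc, (0:ℝ) < Real.Gamma (α + ml l) := fun l =>
    Real.Gamma_pos_of_pos (add_pos hα (by exact_mod_cast hml l))
  have gp : (0:ℝ) < ∏ k, Real.Gamma (α + nk k) :=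
    Finset.prod_pos (fun k _ => g3 k)
  have gp' : (0:ℝ) < ∏ l, Real.Gamma (α + ml l) :=
    Finset.prod_pos (fun l _ => g3' l)
  have g4 : (0:ℝ) < Real.Gamma ((n:ℝ) + α * Kr) := Real.Gamma_pos_of_pos (by positivity)
  have g4' : (0:ℝ) < Real.Gamma ((p:ℝ) + α * Kc) := Real.Gamma_pos_of_pos (by positivity)
  have e1 : Real.log (Real.Gamma (α * Kr)) =
      Real.log (Real.Gamma (α * Kr + 1)) - Real.log α - Real.log Kr := by
    rw [Real.Gamma_add_one hαKr.ne', Real.log_mul hαKr.ne' g1.ne',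
      Real.log_mul hα.ne' hKr0.ne']
    ring
  have e1' : Real.log (Real.Gamma (α * Kc)) =
      Real.log (Real.Gamma (α * Kc + 1)) - Real.log α - Real.log Kc := by
    rw [Real.Gamma_add_one hαKc.ne', Real.log_mul hαKc.ne' g1'.ne',
      Real.log_mul hα.ne' hKc0.ne']
    ring
  have e2 : Real.log (Real.Gamma α) =
      Real.log (Real.Gamma (α + 1)) - Real.log α := by
    rw [Real.Gamma_add_one hα.ne', Real.log_mul hα.ne' g2.ne']
    ring
  rw [hG]
  rw [Real.log_mul (by positivity) (by positivity),
    Real.log_div (by positivity) (by positivity),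
    Real.log_div (by positivity) (by positivity),
    Real.log_mul g1.ne' gp.ne', Real.log_mul g1'.ne' gp'.ne',
    Real.log_mul (by positivity) g4.ne', Real.log_mul (by positivity) g4'.ne',
    Real.log_pow, Real.log_pow,
    Real.log_prod (fun k _ => (g3 k).ne'), Real.log_prod (fun l _ => (g3' l).ne'),
    e1, e1', e2]
  ring
end
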